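/- Let V be a finite-dimensional complex inner product space with four square-zero operators Q⁺₁, Q⁻₁, Q⁺₂, Q⁻₂ such that the pairs (Qᵅ₁) and (Qᵅ₂) each satisfy the Hodge relations [Qᵅₐ, (Qᵝₐ)†] = δᵅᵝ Δₐ, all operators with different subscripts a anticommute, and [Qᵅ₁, (Qᵝ₂)†] = 0. Suppose the Q⁻₂Q⁺₂ lemma holds on V. Then the induced operators Q⁻₂*, Q⁺₂* on H(V, Q⁺₁) := ker Q⁺₁ / im Q⁺₁ satisfy the Q⁻Q⁺ lemma: any class [x] with Q⁻₂*[x] = Q⁺₂*[x] = 0 that lies in the image of Q⁻₂* or Q⁺₂* lies in the image of Q⁻₂*Q⁺₂*. -/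

import Mathlib

open LinearMap (adjoint)
open scoped InnerProductSpace

set_option maxHeartbeats 1000000 in
/-- Iterated `Q⁻Q⁺` lemma: if `V` carries two compatible Kähler packages (indexed
by `a = 1, 2`) and the `Q⁻₂Q⁺₂` lemma holds on `V`, then the operators induced by
`Q⁻₂, Q⁺₂` on the cohomology `H(V, Q⁺₁) = ker Q⁺₁ / im Q⁺₁` satisfy the `Q⁻Q⁺`
lemma, stated here at the level of representatives: classes are represented by
`Q⁺₁`-closed vectors and equality of classes means difference in `im Q⁺₁`. -/
theorem stmt11 {V : Type*} [NormedAddCommGroup V] [InnerProductSpace ℂ V]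
    [FiniteDimensional ℂ V]
    (Qp1 Qm1 Qp2 Qm2 : V →ₗ[ℂ] V)
    (hp1 : Qp1 ∘ₗ Qp1 = 0) (hm1 : Qm1 ∘ₗ Qm1 = 0)
    (hp2 : Qp2 ∘ₗ Qp2 = 0) (hm2 : Qm2 ∘ₗ Qm2 = 0)
    (hanti1 : Qp1 ∘ₗ Qm1 + Qm1 ∘ₗ Qp1 = 0)
    (hanti2 : Qp2 ∘ₗ Qm2 + Qm2 ∘ₗ Qp2 = 0)
    (hanti12pp : Qp1 ∘ₗ Qp2 + Qp2 ∘ₗ Qp1 = 0)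
    (hanti12pm : Qp1 ∘ₗ Qm2 + Qm2 ∘ₗ Qp1 = 0)
    (hanti12mp : Qm1 ∘ₗ Qp2 + Qp2 ∘ₗ Qm1 = 0)
    (hanti12mm : Qm1 ∘ₗ Qm2 + Qm2 ∘ₗ Qm1 = 0)
    (Δ1 Δ2 : V →ₗ[ℂ] V)
    (hΔ1p : Qp1 ∘ₗ adjoint Qp1 + adjoint Qp1 ∘ₗ Qp1 = Δ1)
    (hΔ1m : Qm1 ∘ₗ adjoint Qm1 + adjoint Qm1 ∘ₗ Qm1 = Δ1)
    (hcross1 : Qp1 ∘ₗ adjoint Qm1 + adjoint Qm1 ∘ₗ Qp1 = 0)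
    (hΔ2p : Qp2 ∘ₗ adjoint Qp2 + adjoint Qp2 ∘ₗ Qp2 = Δ2)
    (hΔ2m : Qm2 ∘ₗ adjoint Qm2 + adjoint Qm2 ∘ₗ Qm2 = Δ2)
    (hcross2 : Qp2 ∘ₗ adjoint Qm2 + adjoint Qm2 ∘ₗ Qp2 = 0)
    (hcross12 : Qp1 ∘ₗ adjoint Qp2 + adjoint Qp2 ∘ₗ Qp1 = 0)
    (hcross12' : Qp1 ∘ₗ adjoint Qm2 + adjoint Qm2 ∘ₗ Qp1 = 0)
    (hcross21 : Qm1 ∘ₗ adjoint Qp2 + adjoint Qp2 ∘ₗ Qm1 = 0)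
    (hcross21' : Qm1 ∘ₗ adjoint Qm2 + adjoint Qm2 ∘ₗ Qm1 = 0)
    (hddc2 : ∀ x : V, Qm2 x = 0 → Qp2 x = 0 →
      ((∃ x', x = Qm2 x') ∨ (∃ x', x = Qp2 x')) → ∃ xt, x = Qm2 (Qp2 xt)) :
    ∀ x : V, Qp1 x = 0 →
      (∃ a : V, Qm2 x = Qp1 a) → (∃ a : V, Qp2 x = Qp1 a) →
      ((∃ x' b : V, Qp1 x' = 0 ∧ x = Qm2 x' + Qp1 b) ∨
        (∃ x' b : V, Qp1 x' = 0 ∧ x = Qp2 x' + Qp1 b)) →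
      ∃ xt b : V, Qp1 xt = 0 ∧ x = Qm2 (Qp2 xt) + Qp1 b := by
  set A := adjoint Qp1 with hAdef
  -- pointwise versions of the anticommutation relations we need
  have app : ∀ v, Qp1 (Qp2 v) = -Qp2 (Qp1 v) := by
    intro v
    have h := LinearMap.congr_fun hanti12pp v
    simp only [LinearMap.add_apply, LinearMap.comp_apply, LinearMap.zero_apply] at h
    exact eq_neg_of_add_eq_zero_left h
  have apm : ∀ v, Qp1 (Qm2 v) = -Qm2 (Qp1 v) := by
    intro v
    have h := LinearMap.congr_fun hanti12pm v
    simp only [LinearMap.add_apply, LinearMap.comp_apply, LinearMap.zero_apply] at h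
    exact eq_neg_of_add_eq_zero_left h
  -- adjoints of the cross relations: Qp2 and Qm2 anticommute with A = adjoint Qp1
  have hA2 : ∀ (T : V →ₗ[ℂ] V), Qp1 ∘ₗ adjoint T + adjoint T ∘ₗ Qp1 = 0 →
      ∀ v, A (T v) = -T (A v) := by
    intro T hT v
    have h := congrArg LinearMap.adjoint hT
    rw [map_add, LinearMap.adjoint_comp, LinearMap.adjoint_comp, LinearMap.adjoint_adjoint,
      map_zero] at h
    have h' := LinearMap.congr_fun h v
    simp only [LinearMap.add_apply, LinearMap.comp_apply, LinearMap.zero_apply] at h'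
    exact eq_neg_of_add_eq_zero_right h'
  have aAp : ∀ v, A (Qp2 v) = -Qp2 (A v) := hA2 Qp2 hcross12
  have aAm : ∀ v, A (Qm2 v) = -Qm2 (A v) := hA2 Qm2 hcross12'
  -- Δ1 pointwise
  have hΔpt : ∀ v, Δ1 v = Qp1 (A v) + A (Qp1 v) := by
    intro v
    have h := LinearMap.congr_fun hΔ1p v
    simp only [LinearMap.add_apply, LinearMap.comp_apply] at h
    exact h.symm
  have hQp1Qp1 : ∀ v, Qp1 (Qp1 v) = 0 := by
    intro v
    simpa using LinearMap.congr_fun hp1 v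
  -- Qp2, Qm2 commute with Δ1
  have hcommp : ∀ v, Δ1 (Qp2 v) = Qp2 (Δ1 v) := by
    intro v
    rw [hΔpt, hΔpt, aAp, app]
    simp only [map_neg, map_add]
    rw [app, aAp]
    simp only [neg_neg]
  have hcommm : ∀ v, Δ1 (Qm2 v) = Qm2 (Δ1 v) := by
    intro v
    rw [hΔpt, hΔpt, aAm, apm]
    simp only [map_neg, map_add]
    rw [apm, aAm]
    simp only [neg_neg]
  -- self-adjointness of Δ1
  have hΔsa : adjoint Δ1 = Δ1 := by
    rw [← hΔ1p, map_add, LinearMap.adjoint_comp, LinearMap.adjoint_comp,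
      LinearMap.adjoint_adjoint]
  -- the harmonic space
  set K : Submodule ℂ V := LinearMap.ker Δ1 with hKdef
  have hmemK : ∀ v, v ∈ K ↔ (Qp1 v = 0 ∧ A v = 0) := by
    intro v
    constructor
    · intro hv
      have hv0 : Δ1 v = 0 := hv
      have h0 : (0 : ℂ) = ⟪A v, A v⟫_ℂ + ⟪Qp1 v, Qp1 v⟫_ℂ := by
        have e1 : ⟪Qp1 (A v), v⟫_ℂ = ⟪A v, A v⟫_ℂ := by
          rw [← LinearMap.adjoint_inner_right Qp1, ← hAdef]
        have e2 : ⟪A (Qp1 v), v⟫_ℂ = ⟪Qp1 v, Qp1 v⟫_ℂ := by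
          rw [hAdef, LinearMap.adjoint_inner_left]
        calc (0 : ℂ) = ⟪Δ1 v, v⟫_ℂ := by rw [hv0, inner_zero_left]
          _ = ⟪Qp1 (A v), v⟫_ℂ + ⟪A (Qp1 v), v⟫_ℂ := by rw [hΔpt, inner_add_left]
          _ = ⟪A v, A v⟫_ℂ + ⟪Qp1 v, Qp1 v⟫_ℂ := by rw [e1, e2]
      rw [inner_self_eq_norm_sq_to_K, inner_self_eq_norm_sq_to_K] at h0
      norm_cast at h0
      have h0' : ‖A v‖ ^ 2 + ‖Qp1 v‖ ^ 2 = (0 : ℝ) := by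
        simpa [← Complex.ofReal_pow] using congrArg Complex.re h0.symm
      have h1 : ‖Qp1 v‖ = 0 := by nlinarith [norm_nonneg (A v), norm_nonneg (Qp1 v)]
      have h2 : ‖A v‖ = 0 := by nlinarith [norm_nonneg (A v), norm_nonneg (Qp1 v)]
      exact ⟨norm_eq_zero.mp h1, norm_eq_zero.mp h2⟩
    · rintro ⟨h1, h2⟩
      show Δ1 v = 0
      rw [hΔpt, h1, h2, map_zero, map_zero, add_zero]
  -- image of Qp1 is orthogonal to K
  have hQp1orth : ∀ b, Qp1 b ∈ Kᗮ := by
    intro b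
    rw [Submodule.mem_orthogonal]
    intro u hu
    rw [← LinearMap.adjoint_inner_left Qp1, ← hAdef, ((hmemK u).mp hu).2, inner_zero_left]
  -- Kᗮ = range Δ1
  have hle : LinearMap.range Δ1 ≤ Kᗮ := by
    rintro _ ⟨y, rfl⟩
    rw [Submodule.mem_orthogonal]
    intro u hu
    rw [← hΔsa, LinearMap.adjoint_inner_right]
    have hu0 : Δ1 u = 0 := hu
    rw [hu0, inner_zero_left]
  have hKperp : Kᗮ = LinearMap.range Δ1 := by
    refine (Submodule.eq_of_le_of_finrank_eq hle ?_).symm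
    have e1 : Module.finrank ℂ (LinearMap.range Δ1) + Module.finrank ℂ K
        = Module.finrank ℂ V := by
      rw [hKdef]; exact LinearMap.finrank_range_add_finrank_ker Δ1
    have e2 := Submodule.finrank_add_finrank_orthogonal (K := K)
    have h := e1.trans e2.symm
    rw [Nat.add_comm (Module.finrank ℂ K) (Module.finrank ℂ Kᗮ)] at h
    exact Nat.add_right_cancel h
  -- the harmonic projection
  set P : V →ₗ[ℂ] V := K.subtype ∘ₗ (K.orthogonalProjectionOnto).toLinearMap with hPdef
  have hPapply : ∀ v, P v = ((K.orthogonalProjectionOnto v : K) : V) := fun _ => rfl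
  have hPmem : ∀ v, P v ∈ K := by
    intro v
    rw [hPapply]
    exact (K.orthogonalProjectionOnto v).2
  have hPK : ∀ v ∈ K, P v = v := by
    intro v hv
    rw [hPapply]
    exact Submodule.starProjection_eq_self_iff.mpr hv
  have hPperp : ∀ v ∈ Kᗮ, P v = 0 := by
    intro v hv
    rw [hPapply, Submodule.orthogonalProjectionOnto_apply_of_mem_orthogonal hv]
    rfl
  have hPsub : ∀ v, v - P v ∈ Kᗮ := by
    intro v
    rw [hPapply]
    exact Submodule.sub_starProjection_mem_orthogonal v
  -- P commutes with any operator commuting with Δ1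
  have hPcomm : ∀ (T : V →ₗ[ℂ] V), (∀ v, Δ1 (T v) = T (Δ1 v)) → ∀ v, P (T v) = T (P v) := by
    intro T hc v
    have h1 : T (P v) ∈ K := by
      show Δ1 (T (P v)) = 0
      have h0 : Δ1 (P v) = 0 := hPmem v
      rw [hc, h0, map_zero]
    have h2 : T (v - P v) ∈ Kᗮ := by
      have hmem := hPsub v
      rw [hKperp] at hmem ⊢
      obtain ⟨z, hz⟩ := hmem
      exact ⟨T z, by rw [hc, hz]⟩
    have hsplit : T v = T (P v) + T (v - P v) := by rw [← map_add]; congr 1; abel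
    rw [hsplit, map_add, hPK _ h1, hPperp _ h2, add_zero]
  -- main argument
  intro x hx hmx hpx him
  obtain ⟨y, hy⟩ : ∃ y, Δ1 y = x - P x := by
    have hmem := hPsub x
    rw [hKperp] at hmem
    exact hmem
  have hQp1Px : Qp1 (P x) = 0 := ((hmemK _).mp (hPmem x)).1
  -- the exact part is Qp1 (A y)
  have hAQp1y : A (Qp1 y) = 0 := by
    have h0 : Qp1 (A (Qp1 y)) = 0 := by
      have h1 : Qp1 (Δ1 y) = 0 := by rw [hy, map_sub, hx, hQp1Px, sub_zero]
      rw [hΔpt, map_add, hQp1Qp1, zero_add] at h1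
      exact h1
    have h2 : ⟪A (Qp1 y), A (Qp1 y)⟫_ℂ = 0 := by
      rw [hAdef, LinearMap.adjoint_inner_left, ← hAdef, h0, inner_zero_right]
    exact inner_self_eq_zero.mp h2
  have hdec : x = P x + Qp1 (A y) := by
    have h1 : Δ1 y = Qp1 (A y) := by rw [hΔpt, hAQp1y, add_zero]
    rw [← h1, hy]; abel
  -- Qm2 and Qp2 kill the harmonic part
  have hkill : ∀ (T : V →ₗ[ℂ] V), (∀ v, Δ1 (T v) = T (Δ1 v)) →
      (∀ v, Qp1 (T v) = -T (Qp1 v)) → (∃ a, T x = Qp1 a) → T (P x) = 0 := by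
    rintro T hc ha ⟨a, haa⟩
    have h1 : T (P x) ∈ K := by
      show Δ1 (T (P x)) = 0
      have h0 : Δ1 (P x) = 0 := hPmem x
      rw [hc, h0, map_zero]
    have h2 : T (P x) ∈ Kᗮ := by
      have e : T (P x) = Qp1 (a + T (A y)) := by
        have hT := congrArg T hdec
        rw [map_add] at hT
        have e2 : T (Qp1 (A y)) = -Qp1 (T (A y)) := by
          rw [ha (A y), neg_neg]
        rw [haa, e2] at hT
        rw [map_add, hT]
        abel
      rw [e]; exact hQp1orth _
    have h3 : ⟪T (P x), T (P x)⟫_ℂ = 0 := (Submodule.mem_orthogonal K _).mp h2 _ h1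
    exact inner_self_eq_zero.mp h3
  have hm0 : Qm2 (P x) = 0 := hkill Qm2 hcommm apm hmx
  have hp0 : Qp2 (P x) = 0 := hkill Qp2 hcommp app hpx
  -- the harmonic part is in the image of Qm2 or Qp2
  have himh : (∃ x', P x = Qm2 x') ∨ (∃ x', P x = Qp2 x') := by
    rcases him with ⟨x', b, hx', hxe⟩ | ⟨x', b, hx', hxe⟩
    · left
      refine ⟨P x', ?_⟩
      rw [hxe, map_add, hPperp _ (hQp1orth b), add_zero, hPcomm Qm2 hcommm]
    · right
      refine ⟨P x', ?_⟩
      rw [hxe, map_add, hPperp _ (hQp1orth b), add_zero, hPcomm Qp2 hcommp]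
  obtain ⟨xt, hxt⟩ := hddc2 (P x) hm0 hp0 himh
  have hfin : P x = Qm2 (Qp2 (P xt)) := by
    have h1 : P (P x) = P x := hPK _ (hPmem x)
    calc P x = P (P x) := h1.symm
      _ = P (Qm2 (Qp2 xt)) := by rw [hxt]
      _ = Qm2 (P (Qp2 xt)) := hPcomm Qm2 hcommm _
      _ = Qm2 (Qp2 (P xt)) := by rw [hPcomm Qp2 hcommp]
  exact ⟨P xt, A y, ((hmemK _).mp (hPmem xt)).1, by rw [hdec, hfin]⟩
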